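/- Let ε > 0, let G be a connected simple graph on the input set [ℓ] with diameter d = max_{i,j∈[ℓ]} dist_G(i,j), and let K be an ℓ×p channel matrix satisfying (ε,G)-Blowfish privacy. Then for every prior distribution π on [ℓ], the min-entropy leakage satisfies I_∞(X;Z) = log( V(X|Z)/V(X) ) ≤ ε d. -/
import Mathlib

lemma bf_walk_bound {ℓ p : ℕ} (ε : ℝ) (G : SimpleGraph (Fin ℓ))
    (K : Fin ℓ → Fin p → ℝ)
    (hBF : ∀ i h : Fin ℓ, G.Adj i h → ∀ j, K i j ≤ Real.exp ε * K h j)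
    {i h : Fin ℓ} (w : G.Walk i h) (j : Fin p) :
    K i j ≤ Real.exp (ε * w.length) * K h j := by
  induction w with
  | nil => simp
  | @cons a b c adj w ih =>
    calc K a j ≤ Real.exp ε * K b j := hBF a b adj j
    _ ≤ Real.exp ε * (Real.exp (ε * w.length) * K c j) :=
        mul_le_mul_of_nonneg_left ih (Real.exp_nonneg ε)
    _ = Real.exp (ε * (SimpleGraph.Walk.cons adj w).length) * K c j := by
        rw [← mul_assoc, ← Real.exp_add, SimpleGraph.Walk.length_cons]
        congr 1
        push_cast
        ring

/-- Connected-graph case of the main bound: if `G` is a connected simple graph on `[ℓ]`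
with diameter `d = max_{i,j} dist_G(i,j)` and `K` is an `ℓ × p` channel matrix
satisfying `(ε, G)`-Blowfish privacy, then for every prior `π` on `[ℓ]` the
min-entropy leakage satisfies `I_∞(X;Z) = log(V(X|Z)/V(X)) ≤ ε d`. -/
theorem leakage_of_blowfish_connected (ε : ℝ) (hε : 0 < ε) (ℓ p : ℕ) (hℓ : 0 < ℓ)
    (G : SimpleGraph (Fin ℓ)) (hconn : G.Connected)
    (d : ℕ)
    (hd_ub : ∀ i j : Fin ℓ, G.dist i j ≤ d)
    (hd_att : ∃ i j : Fin ℓ, G.dist i j = d)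
    (K : Fin ℓ → Fin p → ℝ)
    (hK0 : ∀ i j, 0 ≤ K i j) (hK1 : ∀ i, ∑ j, K i j = 1)
    (hBF : ∀ i h : Fin ℓ, G.Adj i h → ∀ j, K i j ≤ Real.exp ε * K h j)
    (π : Fin ℓ → ℝ) (hπ0 : ∀ i, 0 ≤ π i) (hπ1 : ∑ i, π i = 1) :
    Real.log ((∑ j, Finset.univ.sup' ⟨⟨0, hℓ⟩, Finset.mem_univ _⟩
          (fun i : Fin ℓ => π i * K i j))
        / Finset.univ.sup' ⟨⟨0, hℓ⟩, Finset.mem_univ _⟩ (fun i : Fin ℓ => π i))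
      ≤ ε * d := by
  have hne : (Finset.univ : Finset (Fin ℓ)).Nonempty := ⟨⟨0, hℓ⟩, Finset.mem_univ _⟩
  set M : ℝ := Finset.univ.sup' ⟨⟨0, hℓ⟩, Finset.mem_univ _⟩ (fun i : Fin ℓ => π i) with hM
  set S : ℝ := ∑ j, Finset.univ.sup' ⟨⟨0, hℓ⟩, Finset.mem_univ _⟩
      (fun i : Fin ℓ => π i * K i j) with hS
  -- some input has positive prior
  obtain ⟨i0, hi0⟩ : ∃ i, 0 < π i := by
    by_contra hcon
    push_neg at hcon
    have : (∑ i, π i) ≤ 0 := Finset.sum_nonpos (fun i _ => hcon i)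
    linarith [hπ1]
  have hMpos : 0 < M := lt_of_lt_of_le hi0 (Finset.le_sup' _ (Finset.mem_univ i0))
  set v : Fin ℓ := ⟨0, hℓ⟩ with hv
  -- pointwise bound on each sup'
  have hsup : ∀ j, Finset.univ.sup' ⟨⟨0, hℓ⟩, Finset.mem_univ _⟩
      (fun i : Fin ℓ => π i * K i j) ≤ M * (Real.exp (ε * d) * K v j) := by
    intro j
    apply Finset.sup'_le
    intro i _
    have hπle : π i ≤ M := Finset.le_sup' _ (Finset.mem_univ i)
    obtain ⟨w, hw⟩ := (hconn.preconnected i v).exists_walk_length_eq_dist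
    have hKle : K i j ≤ Real.exp (ε * d) * K v j := by
      calc K i j ≤ Real.exp (ε * w.length) * K v j := bf_walk_bound ε G K hBF w j
      _ ≤ Real.exp (ε * d) * K v j := by
          apply mul_le_mul_of_nonneg_right _ (hK0 v j)
          apply Real.exp_le_exp.mpr
          have : (w.length : ℝ) ≤ (d : ℝ) := by
            exact_mod_cast hw ▸ hd_ub i v
          nlinarith
    exact mul_le_mul hπle hKle (hK0 i j) (le_of_lt hMpos)
  have hSle : S ≤ M * Real.exp (ε * d) := by
    calc S ≤ ∑ j, M * (Real.exp (ε * d) * K v j) := Finset.sum_le_sum (fun j _ => hsup j)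
    _ = M * Real.exp (ε * d) * ∑ j, K v j := by
        rw [Finset.mul_sum]; congr 1; ext j; ring
    _ = M * Real.exp (ε * d) := by rw [hK1 v, mul_one]
  have hS0 : 0 ≤ S := by
    apply Finset.sum_nonneg
    intro j _
    exact le_trans (mul_nonneg (hπ0 i0) (hK0 i0 j))
      (Finset.le_sup' (fun i : Fin ℓ => π i * K i j) (Finset.mem_univ i0))
  have hdiv : S / M ≤ Real.exp (ε * d) := by
    rw [div_le_iff₀ hMpos]
    linarith [hSle]
  rcases eq_or_lt_of_le (div_nonneg hS0 (le_of_lt hMpos)) with h0 | h0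
  · rw [← h0, Real.log_zero]
    positivity
  · exact (Real.log_le_iff_le_exp h0).mpr hdiv
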